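/- Let ν > 0 and z > 0 be real numbers. Then the function t ↦ J_ν(t)²/t is integrable on (0, z) and ∫_0^z J_ν(t)²/t dt = (z/2)^{2ν} / (2ν · Γ(ν+1)²) · ₂F₃(ν, ν+1/2; ν+1, ν+1, 2ν+1; −z²). -/

import Mathlib

open Real MeasureTheory Filter

/-- Pochhammer symbol `(a)_k = a (a+1) ⋯ (a+k-1)`. -/
noncomputable def poch (a : ℝ) (k : ℕ) : ℝ := ∏ i ∈ Finset.range k, (a + i)

/-- Generalized hypergeometric function `ₚF_q(a; b; x)`. -/
noncomputable def genHyp (a b : List ℝ) (x : ℝ) : ℝ :=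
  ∑' k : ℕ, ((a.map (fun c => poch c k)).prod / (b.map (fun c => poch c k)).prod)
    * x ^ k / (Nat.factorial k : ℝ)

/-- Bessel function of the first kind `J_ν(x)`. -/
noncomputable def besselJ (ν x : ℝ) : ℝ :=
  (x / 2) ^ ν * ∑' k : ℕ, (-1 : ℝ) ^ k * (x / 2) ^ (2 * k) /
    ((Nat.factorial k : ℝ) * Real.Gamma (ν + k + 1))

/-- Modified Bessel function of the first kind `I_ν(x)`. -/
noncomputable def besselI (ν x : ℝ) : ℝ :=
  (x / 2) ^ ν * ∑' k : ℕ, (x / 2) ^ (2 * k) /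
    ((Nat.factorial k : ℝ) * Real.Gamma (ν + k + 1))

/-- Bessel function of the second kind `Y_ν(x)` (non-integer order). -/
noncomputable def besselY (ν x : ℝ) : ℝ :=
  (besselJ ν x * Real.cos (π * ν) - besselJ (-ν) x) / Real.sin (π * ν)

/-- Macdonald function `K_ν(x)` (non-integer order). -/
noncomputable def besselK (ν x : ℝ) : ℝ :=
  (π / 2) * (besselI (-ν) x - besselI ν x) / Real.sin (π * ν)

/-- Digamma function `ψ(x) = Γ'(x)/Γ(x)`. -/
noncomputable def digam (x : ℝ) : ℝ := deriv Real.Gamma x / Real.Gamma x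


section BesselAux

lemma poch_zero (a : ℝ) : poch a 0 = 1 := by simp [poch]

lemma poch_succ (a : ℝ) (n : ℕ) : poch a (n+1) = poch a n * (a + n) := by
  simp [poch, Finset.prod_range_succ]

lemma poch_pos {a : ℝ} (ha : 0 < a) (n : ℕ) : 0 < poch a n := by
  apply Finset.prod_pos; intro i _; positivity

lemma poch_one_le {a : ℝ} (ha : 1 ≤ a) (n : ℕ) : 1 ≤ poch a n := by
  induction n with
  | zero => simp [poch]
  | succ n ih =>
    rw [poch_succ]
    have h : (0:ℝ) ≤ n := Nat.cast_nonneg n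
    nlinarith

lemma poch_add (a : ℝ) (m n : ℕ) : poch a (m + n) = poch a m * poch (a + m) n := by
  rw [poch, poch, poch, Finset.prod_range_add]
  congr 1
  apply Finset.prod_congr rfl
  intro i _
  push_cast; ring

lemma poch_reflect (x : ℝ) (m : ℕ) : poch (x - m + 1) m = (-1)^m * poch (-x) m := by
  have h1 : poch (x - m + 1) m = ∏ i ∈ Finset.range m, (x - i) := by
    rw [poch, ← Finset.prod_range_reflect]
    apply Finset.prod_congr rfl
    intro i hi
    have hi' : i < m := Finset.mem_range.mp hi
    have : ((m - 1 - i : ℕ) : ℝ) = (m : ℝ) - 1 - i := by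
      have h : m - 1 - i = m - (1 + i) := by omega
      rw [h, Nat.cast_sub (by omega)]
      push_cast; ring
    rw [this]; ring
  have h2 : (-1:ℝ)^m * poch (-x) m = ∏ i ∈ Finset.range m, ((-1) * (-x + i)) := by
    rw [Finset.prod_mul_distrib, Finset.prod_const, Finset.card_range, poch]
  rw [h1, h2]
  apply Finset.prod_congr rfl
  intro i _
  ring

lemma vandermonde (a b : ℝ) (n : ℕ) :
    ∑ j ∈ Finset.range (n+1), (n.choose j : ℝ) * poch a j * poch b (n-j) = poch (a+b) n := by
  induction n with
  | zero => simp [poch]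
  | succ n ih =>
    have key : ∑ j ∈ Finset.range (n+2), ((n+1).choose j : ℝ) * poch a j * poch b (n+1-j)
        = (∑ j ∈ Finset.range (n+1), (n.choose j : ℝ) * poch a (j+1) * poch b (n-j))
        + ∑ j ∈ Finset.range (n+1), (n.choose j : ℝ) * poch a j * poch b (n+1-j) := by
      rw [Finset.sum_range_succ' (fun j => ((n+1).choose j : ℝ) * poch a j * poch b (n+1-j)) (n+1)]
      rw [Finset.sum_range_succ' (fun j => (n.choose j : ℝ) * poch a j * poch b (n+1-j)) n]
      have e1 : ∀ j ∈ Finset.range (n+1),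
          (((n+1).choose (j+1) : ℕ) : ℝ) * poch a (j+1) * poch b (n+1-(j+1))
          = (n.choose j : ℝ) * poch a (j+1) * poch b (n-j)
            + (n.choose (j+1) : ℝ) * poch a (j+1) * poch b (n+1-(j+1)) := by
        intro j _
        rw [Nat.choose_succ_succ]
        have : n + 1 - (j+1) = n - j := by omega
        rw [this]
        push_cast; ring
      rw [Finset.sum_congr rfl e1, Finset.sum_add_distrib]
      have e2 : ∀ j ∈ Finset.range (n+1), (n.choose (j+1) : ℝ) * poch a (j+1) * poch b (n+1-(j+1))
          = (n.choose (j+1) : ℝ) * poch a (j+1) * poch b (n-j) := by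
        intro j _
        have : n + 1 - (j+1) = n - j := by omega
        rw [this]
      rw [Finset.sum_congr rfl e2]
      have e3 : ∑ j ∈ Finset.range (n+1), (n.choose (j+1) : ℝ) * poch a (j+1) * poch b (n-j)
          = ∑ j ∈ Finset.range n, (n.choose (j+1) : ℝ) * poch a (j+1) * poch b (n-j) := by
        rw [Finset.sum_range_succ]
        simp
      rw [e3]
      simp
      ring
    have term : ∀ j ∈ Finset.range (n+1),
        (n.choose j : ℝ) * poch a (j+1) * poch b (n-j)
        + (n.choose j : ℝ) * poch a j * poch b (n+1-j)
        = (n.choose j : ℝ) * poch a j * poch b (n-j) * (a+b+n) := by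
      intro j hj
      have hj' : j ≤ n := Nat.lt_succ_iff.mp (Finset.mem_range.mp hj)
      have h1 : n + 1 - j = (n - j) + 1 := by omega
      rw [h1, poch_succ, poch_succ]
      have : ((n - j : ℕ) : ℝ) = (n : ℝ) - j := Nat.cast_sub hj'
      rw [this]
      ring
    rw [key, ← Finset.sum_add_distrib, Finset.sum_congr rfl term, ← Finset.sum_mul, ih,
      ← poch_succ]

lemma Gamma_poch {x : ℝ} (hx : 0 < x) (n : ℕ) :
    Real.Gamma (x + n) = Real.Gamma x * poch x n := by
  induction n with
  | zero => simp [poch_zero]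
  | succ n ih =>
    have h : x + ((n:ℝ)+1) = (x + n) + 1 := by push_cast; ring
    push_cast
    rw [h, Real.Gamma_add_one (by positivity), ih, poch_succ]
    ring

lemma poch_dup (c : ℝ) (n : ℕ) :
    poch (2*c) (2*n) = 4^n * poch c n * poch (c + 1/2) n := by
  induction n with
  | zero => simp [poch_zero]
  | succ n ih =>
    have h : 2*(n+1) = (2*n) + 1 + 1 := by omega
    rw [h, poch_succ, poch_succ, ih, poch_succ, poch_succ]
    push_cast
    ring

/-- The key closed form of the Cauchy-product coefficient. -/
lemma key_sum {ν : ℝ} (hν : 0 < ν) (n : ℕ) :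
    ∑ j ∈ Finset.range (n+1),
        (1 / ((j.factorial : ℝ) * Real.Gamma (ν + j + 1))) *
        (1 / (((n-j).factorial : ℝ) * Real.Gamma (ν + ((n-j : ℕ) : ℝ) + 1)))
      = poch (2*ν+n+1) n / ((n.factorial : ℝ) * Real.Gamma (ν + n + 1)^2) := by
  have hΓn : (0:ℝ) < Real.Gamma (ν + n + 1) := Real.Gamma_pos_of_pos (by positivity)
  rw [eq_div_iff (by positivity)]
  have main : ∀ j ∈ Finset.range (n+1),
      ((1 / ((j.factorial : ℝ) * Real.Gamma (ν + j + 1))) *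
        (1 / (((n-j).factorial : ℝ) * Real.Gamma (ν + ((n-j : ℕ) : ℝ) + 1))))
        * ((n.factorial : ℝ) * Real.Gamma (ν + n + 1)^2)
      = (-1)^n * ((n.choose j : ℝ) * poch (-(ν+n)) j * poch (-(ν+n)) (n-j)) := by
    intro j hj
    have hj' : j ≤ n := Nat.lt_succ_iff.mp (Finset.mem_range.mp hj)
    have hcast : ((n - j : ℕ) : ℝ) = (n:ℝ) - j := Nat.cast_sub hj'
    have hΓj : (0:ℝ) < Real.Gamma (ν + j + 1) := Real.Gamma_pos_of_pos (by positivity)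
    have hΓnj : (0:ℝ) < Real.Gamma (ν + (n-j : ℕ) + 1) := Real.Gamma_pos_of_pos (by positivity)
    -- Γ(ν+n+1) = Γ(ν+j+1) * poch (ν+j+1) (n-j)
    have g1 : Real.Gamma (ν + n + 1) = Real.Gamma (ν + j + 1) * poch (ν + j + 1) (n-j) := by
      rw [← Gamma_poch (by positivity) (n-j)]
      congr 1
      rw [hcast]; ring
    have g2 : Real.Gamma (ν + n + 1) = Real.Gamma (ν + (n-j:ℕ) + 1) * poch (ν + (n-j:ℕ) + 1) j := by
      rw [← Gamma_poch (by positivity) j]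
      congr 1
      rw [hcast]; ring
    have r1 : poch (ν + j + 1) (n-j) = (-1)^(n-j) * poch (-(ν+n)) (n-j) := by
      have : ν + j + 1 = (ν + n) - ((n-j:ℕ):ℝ) + 1 := by rw [hcast]; ring
      rw [this, poch_reflect]
    have r2 : poch (ν + (n-j:ℕ) + 1) j = (-1)^j * poch (-(ν+n)) j := by
      have : ν + (n-j:ℕ) + 1 = (ν + n) - (j:ℝ) + 1 := by rw [hcast]; ring
      rw [this, poch_reflect]
    have hchoose : (n.choose j : ℝ) = (n.factorial : ℝ) / ((j.factorial : ℝ) * ((n-j).factorial : ℝ)) := by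
      rw [eq_div_iff (by positivity)]
      rw [← Nat.choose_mul_factorial_mul_factorial hj']
      push_cast; ring
    have hsign : (-1:ℝ)^j * (-1:ℝ)^(n-j) = (-1)^n := by
      rw [← pow_add]
      congr 1
      omega
    have hfj : (0:ℝ) < (j.factorial : ℝ) := by positivity
    have hfnj : (0:ℝ) < ((n-j).factorial : ℝ) := by positivity
    calc (1 / ((j.factorial : ℝ) * Real.Gamma (ν + j + 1))) *
        (1 / (((n-j).factorial : ℝ) * Real.Gamma (ν + ((n-j : ℕ) : ℝ) + 1)))
        * ((n.factorial : ℝ) * Real.Gamma (ν + n + 1)^2)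
        = (Real.Gamma (ν + j + 1) / Real.Gamma (ν + j + 1)) *
          (Real.Gamma (ν + ((n-j:ℕ):ℝ) + 1) / Real.Gamma (ν + ((n-j:ℕ):ℝ) + 1)) *
          ((n.factorial : ℝ) * poch (ν + j + 1) (n-j) * poch (ν + (n-j:ℕ) + 1) j *
            (1 / ((j.factorial:ℝ) * ((n-j).factorial : ℝ)))) := by
            rw [pow_two]
            nth_rewrite 1 [g1]
            nth_rewrite 1 [g2]
            ring
      _ = (n.factorial : ℝ) * poch (ν + j + 1) (n-j) * poch (ν + (n-j:ℕ) + 1) j *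
            (1 / ((j.factorial:ℝ) * ((n-j).factorial : ℝ))) := by
            rw [div_self hΓj.ne', div_self hΓnj.ne']
            ring
      _ = (-1)^n * ((n.choose j : ℝ) * poch (-(ν+n)) j * poch (-(ν+n)) (n-j)) := by
            rw [r1, r2, hchoose, ← hsign]
            field_simp
  rw [Finset.sum_mul, Finset.sum_congr rfl main, ← Finset.mul_sum, vandermonde]
  have h : -(ν+(n:ℝ)) + -(ν+n) = -(2*ν+2*n) := by ring
  rw [h]
  have h2 := poch_reflect (2*ν+2*(n:ℝ)) n
  have h3 : 2*ν+2*(n:ℝ) - n + 1 = 2*ν+n+1 := by ring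
  rw [h3] at h2
  rw [h2]

lemma key_coeff {ν : ℝ} (hν : 0 < ν) (n : ℕ) :
    (poch (2*ν+n+1) n / ((n.factorial : ℝ) * Real.Gamma (ν + n + 1)^2)) * (1/4)^n / (2*ν+2*n)
      = poch ν n * poch (ν+1/2) n / (poch (ν+1) n * poch (ν+1) n * poch (2*ν+1) n)
        / (2*ν*Real.Gamma (ν+1)^2) / (n.factorial : ℝ) := by
  have hG : Real.Gamma (ν + n + 1) = Real.Gamma (ν+1) * poch (ν+1) n := by
    rw [← Gamma_poch (by positivity) n]
    congr 1
    ring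
  have hpp : poch (2*ν+1) n * poch (2*ν+1+n) n = poch (2*ν+1) (2*n) := by
    rw [show 2*n = n+n from two_mul n, poch_add]
  have hdup : poch (2*ν+1) (2*n) = 4^n * poch (ν+1/2) n * poch (ν+1) n := by
    have h1 : (2*ν+1) = 2*(ν+1/2) := by ring
    have h2 : (ν+1:ℝ) = (ν+1/2) + 1/2 := by ring
    rw [h1, h2, poch_dup]
  have harg : (2*ν+(n:ℝ)+1) = 2*ν+1+n := by ring
  have hE : poch (2*ν+(n:ℝ)+1) n = 4^n * poch (ν+1/2) n * poch (ν+1) n / poch (2*ν+1) n := by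
    rw [eq_div_iff (poch_pos (by positivity) n).ne', harg]
    rw [mul_comm (poch (2*ν+1+(n:ℝ)) n) (poch (2*ν+1) n), hpp, hdup]
  have hA : poch ν n = ν * poch (ν+1) n / (ν+n) := by
    rw [eq_div_iff (by positivity)]
    have h1 : poch ν (n+1) = poch ν n * (ν+n) := poch_succ ν n
    have h2 : poch ν (n+1) = ν * poch (ν+1) n := by
      rw [show n+1 = 1+n from by omega, poch_add]
      simp [poch]
    rw [← h1, h2]
  have c1 : (0:ℝ) < poch (ν+1) n := poch_pos (by positivity) n
  have c2 : (0:ℝ) < poch (2*ν+1) n := poch_pos (by positivity) n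
  have c3 : (0:ℝ) < poch (ν+1/2) n := poch_pos (by positivity) n
  have c4 : (0:ℝ) < Real.Gamma (ν+1) := Real.Gamma_pos_of_pos (by positivity)
  have c5 : (0:ℝ) < (n.factorial : ℝ) := by positivity
  have c6 : (0:ℝ) < ν + n := by positivity
  rw [hE, hA, hG]
  field_simp
  ring_nf
  have h4 : (1/4:ℝ)^n * 4^n = 1 := by rw [← mul_pow]; norm_num
  linear_combination (poch (1/2+ν) n * (poch (1+ν*2) n)⁻¹) * h4

lemma integral_rpow_Ioo {p z : ℝ} (hp : -1 < p) (hz : 0 < z) :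
    IntegrableOn (fun t => t ^ p) (Set.Ioo 0 z) ∧
    ∫ t in Set.Ioo 0 z, t ^ p = z ^ (p+1) / (p+1) := by
  have hint : IntervalIntegrable (fun t : ℝ => t ^ p) volume 0 z :=
    intervalIntegral.intervalIntegrable_rpow' hp
  have hIoc : IntegrableOn (fun t : ℝ => t ^ p) (Set.Ioc 0 z) :=
    (intervalIntegrable_iff_integrableOn_Ioc_of_le hz.le).mp hint
  constructor
  · exact hIoc.mono_set Set.Ioo_subset_Ioc_self
  have hp1 : 0 < p + 1 := by linarith
  have hderiv : ∀ x ∈ Set.Ioo 0 z, HasDerivAt (fun t : ℝ => t ^ (p+1) / (p+1)) (x ^ p) x := by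
    intro x hx
    have h := (Real.hasDerivAt_rpow_const (p := p+1) (Or.inl hx.1.ne')).div_const (p+1)
    have : (p+1) * x ^ (p+1-1) / (p+1) = x ^ p := by
      rw [show p+1-1 = p from by ring]
      field_simp
    rwa [this] at h
  have hcont : ContinuousOn (fun t : ℝ => t ^ (p+1) / (p+1)) (Set.Icc 0 z) := by
    apply ContinuousOn.div_const
    intro x _
    exact (Real.continuousAt_rpow_const x (p+1) (Or.inr hp1.le)).continuousWithinAt
  have := intervalIntegral.integral_eq_sub_of_hasDerivAt_of_le hz.le hcont hderiv hint
  rw [intervalIntegral.integral_of_le hz.le, MeasureTheory.integral_Ioc_eq_integral_Ioo] at this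
  rw [this, Real.zero_rpow hp1.ne']
  ring

/-- coefficient of the Bessel series -/
noncomputable def bc (ν : ℝ) (k : ℕ) : ℝ := 1 / ((k.factorial : ℝ) * Real.Gamma (ν + k + 1))

/-- Cauchy product coefficient -/
noncomputable def bS (ν : ℝ) (n : ℕ) : ℝ := ∑ j ∈ Finset.range (n+1), bc ν j * bc ν (n-j)

lemma bc_pos {ν : ℝ} (hν : 0 < ν) (k : ℕ) : 0 < bc ν k := by
  have := Real.Gamma_pos_of_pos (show (0:ℝ) < ν + k + 1 by positivity)
  rw [bc]
  positivity

lemma bc_le {ν : ℝ} (hν : 0 < ν) (k : ℕ) :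
    bc ν k ≤ (1 / Real.Gamma (ν+1)) * (1 / (k.factorial : ℝ)) := by
  have hG1 : 0 < Real.Gamma (ν+1) := Real.Gamma_pos_of_pos (by positivity)
  have hpoch : 1 ≤ poch (ν+1) k := poch_one_le (by linarith) k
  have hg : Real.Gamma (ν + k + 1) = Real.Gamma (ν+1) * poch (ν+1) k := by
    rw [← Gamma_poch (by positivity) k]; congr 1; ring
  rw [bc, hg]
  have hfk : (0:ℝ) < (k.factorial : ℝ) := by positivity
  rw [div_le_iff₀ (by positivity), one_div, one_div]
  calc (1:ℝ) ≤ poch (ν+1) k := hpoch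
    _ = (Real.Gamma (ν+1))⁻¹ * (k.factorial:ℝ)⁻¹ * ((k.factorial:ℝ) * (Real.Gamma (ν+1) * poch (ν+1) k)) := by
        field_simp

lemma summable_bc {ν : ℝ} (hν : 0 < ν) {r : ℝ} (hr : 0 ≤ r) :
    Summable (fun k => bc ν k * r ^ k) := by
  have hG1 : 0 < Real.Gamma (ν+1) := Real.Gamma_pos_of_pos (by positivity)
  apply Summable.of_nonneg_of_le (fun k => by have := bc_pos hν k; positivity)
    (fun k => ?_) (((Real.summable_pow_div_factorial r).mul_left (1/Real.Gamma (ν+1))))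
  calc bc ν k * r ^ k ≤ ((1 / Real.Gamma (ν+1)) * (1 / (k.factorial : ℝ))) * r ^ k :=
        mul_le_mul_of_nonneg_right (bc_le hν k) (by positivity)
    _ = 1 / Real.Gamma (ν+1) * (r ^ k / (k.factorial : ℝ)) := by ring

lemma besselJ_eq {ν : ℝ} (t : ℝ) :
    besselJ ν t = (t/2)^ν * ∑' k, (-1:ℝ)^k * ((t/2)^2)^k * bc ν k := by
  rw [besselJ]
  congr 1
  apply tsum_congr
  intro k
  rw [pow_mul, bc]
  ring

lemma summable_J_norm {ν : ℝ} (hν : 0 < ν) (t : ℝ) :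
    Summable (fun k => ‖(-1:ℝ)^k * ((t/2)^2)^k * bc ν k‖) := by
  have h : (fun k => ‖(-1:ℝ)^k * ((t/2)^2)^k * bc ν k‖) = fun k => bc ν k * ((t/2)^2) ^ k := by
    funext k
    rw [norm_mul, norm_mul, norm_pow, norm_pow, norm_neg, norm_one, one_pow, one_mul,
      Real.norm_eq_abs, Real.norm_eq_abs, abs_of_nonneg (sq_nonneg _),
      abs_of_nonneg (bc_pos hν k).le, mul_comm]
  rw [h]
  exact summable_bc hν (sq_nonneg _)

lemma summable_bS {ν : ℝ} (hν : 0 < ν) {r : ℝ} (hr : 0 ≤ r) :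
    Summable (fun n => bS ν n * r ^ n) := by
  have hf : Summable (fun k => ‖bc ν k * r ^ k‖) := by
    have h : (fun k => ‖bc ν k * r ^ k‖) = fun k => bc ν k * r ^ k := by
      funext k
      rw [Real.norm_eq_abs, abs_of_nonneg (by have := bc_pos hν k; positivity)]
    rw [h]; exact summable_bc hν hr
  have := summable_norm_sum_mul_range_of_summable_norm hf hf
  apply this.of_nonneg_of_le
  · intro n
    have : 0 ≤ bS ν n := Finset.sum_nonneg fun j _ => by
      have := bc_pos hν j; have := bc_pos hν (n-j); positivity
    positivity
  · intro n
    calc bS ν n * r ^ n = ∑ j ∈ Finset.range (n+1), (bc ν j * r^j) * (bc ν (n-j) * r^(n-j)) := by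
          rw [bS, Finset.sum_mul]
          apply Finset.sum_congr rfl
          intro j hj
          have hj' : j ≤ n := Nat.lt_succ_iff.mp (Finset.mem_range.mp hj)
          have : r^j * r^(n-j) = r^n := by rw [← pow_add]; congr 1; omega
          rw [← this]; ring
      _ ≤ ‖∑ j ∈ Finset.range (n+1), (bc ν j * r^j) * (bc ν (n-j) * r^(n-j))‖ := le_abs_self _

lemma besselJ_sq {ν : ℝ} (hν : 0 < ν) {t : ℝ} (ht : 0 < t) :
    besselJ ν t ^ 2 = (t/2)^(2*ν) * ∑' n, (-1:ℝ)^n * ((t/2)^2)^n * bS ν n := by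
  have hrp : ((t/2:ℝ)^ν)^2 = (t/2)^(2*ν) := by
    rw [← Real.rpow_natCast ((t/2)^ν) 2, ← Real.rpow_mul (by positivity)]
    norm_num [mul_comm]
  rw [besselJ_eq, mul_pow, hrp]
  congr 1
  rw [pow_two]
  rw [tsum_mul_tsum_eq_tsum_sum_range_of_summable_norm (summable_J_norm hν t)
    (summable_J_norm hν t)]
  apply tsum_congr
  intro n
  rw [bS, Finset.mul_sum]
  apply Finset.sum_congr rfl
  intro j hj
  have hj' : j ≤ n := Nat.lt_succ_iff.mp (Finset.mem_range.mp hj)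
  have h1 : (-1:ℝ)^j * (-1:ℝ)^(n-j) = (-1)^n := by rw [← pow_add]; congr 1; omega
  have h2 : ((t/2:ℝ)^2)^j * ((t/2:ℝ)^2)^(n-j) = ((t/2)^2)^n := by
    rw [← pow_add]; congr 1; omega
  calc ((-1:ℝ)^j * ((t/2)^2)^j * bc ν j) * ((-1:ℝ)^(n-j) * ((t/2)^2)^(n-j) * bc ν (n-j))
      = ((-1:ℝ)^j * (-1:ℝ)^(n-j)) * (((t/2:ℝ)^2)^j * ((t/2:ℝ)^2)^(n-j)) * (bc ν j * bc ν (n-j)) := by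
        ring
    _ = (-1:ℝ)^n * ((t/2)^2)^n * (bc ν j * bc ν (n-j)) := by rw [h1, h2]

lemma besselJ_measurable {ν : ℝ} (hν : 0 < ν) : Measurable (besselJ ν) := by
  have h1 : Measurable (fun x : ℝ => (x/2)^ν) :=
    ((Real.continuous_rpow_const hν.le).comp (continuous_id.div_const 2)).measurable
  apply h1.mul
  apply measurable_of_tendsto_metrizable
    (f := fun N x => ∑ k ∈ Finset.range N,
      (-1:ℝ)^k * (x/2)^(2*k) / ((k.factorial : ℝ) * Real.Gamma (ν + k + 1)))
  · intro N
    apply Finset.measurable_sum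
    intro k _
    exact ((((measurable_id.div_const 2).pow_const (2*k)).const_mul ((-1:ℝ)^k)).div_const _)
  · rw [tendsto_pi_nhds]
    intro x
    have hsum : Summable (fun k : ℕ => (-1:ℝ)^k * (x/2)^(2*k) / ((k.factorial : ℝ) * Real.Gamma (ν + k + 1))) := by
      have h : (fun k : ℕ => (-1:ℝ)^k * (x/2)^(2*k) / ((k.factorial : ℝ) * Real.Gamma (ν + k + 1)))
          = fun k : ℕ => (-1:ℝ)^k * ((x/2)^2)^k * bc ν k := by
        funext k; rw [pow_mul, bc]; ring
      rw [h]
      exact (summable_J_norm hν x).of_norm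
    exact hsum.hasSum.tendsto_sum_nat

lemma besselJ_bound {ν z : ℝ} (hν : 0 < ν) (hz : 0 < z) {t : ℝ} (ht : 0 < t) (htz : t ≤ z) :
    |besselJ ν t| ≤ (t/2)^ν * ∑' k, bc ν k * ((z/2)^2)^k := by
  rw [besselJ_eq, abs_mul, abs_of_nonneg (by positivity : (0:ℝ) ≤ (t/2)^ν)]
  apply mul_le_mul_of_nonneg_left _ (by positivity : (0:ℝ) ≤ (t/2)^ν)
  calc |∑' k, (-1:ℝ)^k * ((t/2)^2)^k * bc ν k|
      ≤ ∑' k, ‖(-1:ℝ)^k * ((t/2)^2)^k * bc ν k‖ := by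
        rw [← Real.norm_eq_abs]
        exact norm_tsum_le_tsum_norm (summable_J_norm hν t)
    _ ≤ ∑' k, bc ν k * ((z/2)^2)^k := by
        apply Summable.tsum_le_tsum _ (summable_J_norm hν t) (summable_bc hν (sq_nonneg _))
        intro k
        rw [norm_mul, norm_mul, norm_pow, norm_pow, norm_neg, norm_one, one_pow, one_mul,
          Real.norm_eq_abs, Real.norm_eq_abs, abs_of_nonneg (sq_nonneg _),
          abs_of_nonneg (bc_pos hν k).le, mul_comm]
        apply mul_le_mul_of_nonneg_left _ (bc_pos hν k).le
        apply pow_le_pow_left₀ (sq_nonneg _)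
        apply pow_le_pow_left₀ (by positivity)
        linarith

end BesselAux

theorem besselJ_sq_div_integral (ν z : ℝ) (hν : 0 < ν) (hz : 0 < z) :
    IntegrableOn (fun t => besselJ ν t ^ 2 / t) (Set.Ioo 0 z) ∧
    ∫ t in Set.Ioo 0 z, besselJ ν t ^ 2 / t =
      (z / 2) ^ (2 * ν) / (2 * ν * Real.Gamma (ν + 1) ^ 2) *
        genHyp [ν, ν + 1 / 2] [ν + 1, ν + 1, 2 * ν + 1] (-z ^ 2) := by
  have h2ν : (0:ℝ) < 2 * ν := by linarith
  have h2pos : (0:ℝ) < (2:ℝ)^(2*ν) := Real.rpow_pos_of_pos (by norm_num) _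
  -- the series coefficients
  set K : ℕ → ℝ := fun n => (-1)^n * bS ν n * ((2:ℝ)^(2*ν))⁻¹ * (1/4)^n with hK
  set F : ℕ → ℝ → ℝ := fun n t => K n * t ^ (2*ν+2*(n:ℝ)-1) with hF
  have hSnn : ∀ n, 0 ≤ bS ν n := fun n => Finset.sum_nonneg fun j _ => by
    have := bc_pos hν j; have := bc_pos hν (n-j); positivity
  -- pointwise expansion on Ioo
  have hpt : ∀ t ∈ Set.Ioo (0:ℝ) z, besselJ ν t ^ 2 / t = ∑' n, F n t := by
    intro t ht
    obtain ⟨ht0, htz⟩ := ht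
    rw [besselJ_sq hν ht0, mul_comm, mul_div_assoc, ← tsum_mul_right]
    apply tsum_congr
    intro n
    have hu : ((t/2:ℝ)^2)^n = t^(2*n : ℕ) * (1/4)^n := by
      rw [div_pow, pow_mul]
      ring
    have hrw : t^(2*ν+2*(n:ℝ)-1) = t^(2*ν) * t^((2*n : ℕ):ℝ) * t⁻¹ := by
      rw [← Real.rpow_add ht0, ← Real.rpow_neg_one t, ← Real.rpow_add ht0]
      congr 1
      push_cast
      ring
    have hdiv : (t/2:ℝ)^(2*ν) = t^(2*ν) * ((2:ℝ)^(2*ν))⁻¹ := by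
      rw [Real.div_rpow ht0.le (by norm_num), div_eq_mul_inv]
    simp only [hF, hK]
    rw [hu, hdiv, hrw, Real.rpow_natCast]
    field_simp
  -- measurability of each term
  have hFm : ∀ n : ℕ, AEStronglyMeasurable (F n) (volume.restrict (Set.Ioo 0 z)) := by
    intro n
    apply ContinuousOn.aestronglyMeasurable _ measurableSet_Ioo
    simp only [hF]
    apply continuousOn_const.mul
    intro x hx
    exact (Real.continuousAt_rpow_const x _ (Or.inl (ne_of_gt hx.1))).continuousWithinAt
  -- integrability of each term
  have hexp : ∀ n : ℕ, (-1:ℝ) < 2*ν+2*(n:ℝ)-1 := by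
    intro n
    have : (0:ℝ) ≤ n := Nat.cast_nonneg n
    linarith
  have hFint : ∀ n : ℕ, IntegrableOn (F n) (Set.Ioo 0 z) := by
    intro n
    exact ((integral_rpow_Ioo (hexp n) hz).1.const_mul (K n))
  -- value of each integral
  have hzexp : ∀ n : ℕ, (2*ν+2*(n:ℝ)-1) + 1 = 2*ν+2*(n:ℝ) := by intro n; ring
  have hzpow : ∀ n : ℕ, z ^ (2*ν+2*(n:ℝ)) = z^(2*ν) * (z^2)^n := by
    intro n
    rw [Real.rpow_add hz, ← Real.rpow_natCast (z^2) n, ← Real.rpow_natCast z 2,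
      ← Real.rpow_mul hz.le]
    push_cast
    ring_nf
  have hIval : ∀ n : ℕ, ∫ t in Set.Ioo 0 z, F n t
      = K n * (z^(2*ν) * (z^2)^n / (2*ν+2*(n:ℝ))) := by
    intro n
    simp only [hF]
    rw [MeasureTheory.integral_const_mul, (integral_rpow_Ioo (hexp n) hz).2, hzexp n, hzpow n]
  -- integral of the norms
  have hInorm : ∀ n : ℕ, ∫ t in Set.Ioo 0 z, ‖F n t‖
      = |K n| * (z^(2*ν) * (z^2)^n / (2*ν+2*(n:ℝ))) := by
    intro n
    have heq : Set.EqOn (fun t => ‖F n t‖) (fun t => |K n| * t ^ (2*ν+2*(n:ℝ)-1))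
        (Set.Ioo 0 z) := by
      intro t ht
      simp only [hF, Real.norm_eq_abs, abs_mul]
      rw [abs_of_nonneg (Real.rpow_nonneg ht.1.le _)]
    rw [MeasureTheory.setIntegral_congr_fun measurableSet_Ioo heq,
      MeasureTheory.integral_const_mul, (integral_rpow_Ioo (hexp n) hz).2, hzexp n, hzpow n]
  -- summability of the norm integrals
  have habsK : ∀ n : ℕ, |K n| = bS ν n * ((2:ℝ)^(2*ν))⁻¹ * (1/4)^n := by
    intro n
    rw [hK, abs_mul, abs_mul, abs_mul, abs_pow, abs_neg, abs_one, one_pow, one_mul,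
      abs_of_nonneg (hSnn n), abs_of_nonneg (by positivity : (0:ℝ) ≤ ((2:ℝ)^(2*ν))⁻¹),
      abs_of_nonneg (by positivity : (0:ℝ) ≤ ((1:ℝ)/4)^n)]
  have hsumnorm : Summable fun n => ∫ t in Set.Ioo 0 z, ‖F n t‖ := by
    rw [summable_congr hInorm]
    apply Summable.of_nonneg_of_le
      (fun n => by have := hSnn n; have := (habsK n) ▸ (abs_nonneg (K n)); positivity)
      (fun n => ?_)
      (((summable_bS hν (by positivity : (0:ℝ) ≤ z^2/4)).mul_left
        (((2:ℝ)^(2*ν))⁻¹ * z^(2*ν) / (2*ν))))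
    rw [habsK]
    have hb : bS ν n * (z^2/4)^n = bS ν n * (1/4)^n * (z^2)^n := by
      rw [div_pow, div_eq_mul_inv, one_div, inv_pow]
      ring
    rw [← mul_div_assoc]
    rw [div_le_iff₀ (by positivity : (0:ℝ) < 2*ν+2*(n:ℝ))]
    have h1 : ((2:ℝ)^(2*ν))⁻¹ * z^(2*ν) / (2*ν) * (bS ν n * (z^2/4)^n) * (2*ν+2*(n:ℝ))
        = bS ν n * ((2:ℝ)^(2*ν))⁻¹ * (1/4)^n * (z^(2*ν) * (z^2)^n) * ((2*ν+2*(n:ℝ))/(2*ν)) := by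
      rw [hb]; ring
    rw [h1]
    have h2 : (1:ℝ) ≤ (2*ν+2*(n:ℝ))/(2*ν) := by
      rw [le_div_iff₀ h2ν]
      have : (0:ℝ) ≤ n := Nat.cast_nonneg n
      linarith
    nth_rewrite 1 [← mul_one (bS ν n * ((2:ℝ)^(2*ν))⁻¹ * (1/4)^n * (z^(2*ν) * (z^2)^n))]
    apply mul_le_mul_of_nonneg_left h2
    have := hSnn n
    positivity
  constructor
  · -- integrability
    set B := ∑' k, bc ν k * ((z/2)^2)^k with hB
    have hBnn : 0 ≤ B := tsum_nonneg fun k => by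
      have := bc_pos hν k; positivity
    apply Integrable.mono'
      ((integral_rpow_Ioo (show (-1:ℝ) < 2*ν-1 by linarith) hz).1.const_mul
        (((2:ℝ)^(2*ν))⁻¹ * B^2))
      ((((besselJ_measurable hν).pow_const 2).div measurable_id).aestronglyMeasurable)
    filter_upwards [ae_restrict_mem measurableSet_Ioo] with t ht
    have ht0 : (0:ℝ) < t := ht.1
    have hJ : |besselJ ν t| ≤ (t/2)^ν * B := besselJ_bound hν hz ht0 ht.2.le
    have h2 : besselJ ν t ^ 2 ≤ ((t/2)^ν * B)^2 := by
      rw [← sq_abs]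
      apply pow_le_pow_left₀ (abs_nonneg _) hJ
    have hrp : ((t/2:ℝ)^ν)^2 = (t/2)^(2*ν) := by
      rw [← Real.rpow_natCast ((t/2)^ν) 2, ← Real.rpow_mul (by positivity)]
      norm_num [mul_comm]
    have hdiv : (t/2:ℝ)^(2*ν) = t^(2*ν) * ((2:ℝ)^(2*ν))⁻¹ := by
      rw [Real.div_rpow ht0.le (by norm_num), div_eq_mul_inv]
    have ht1 : t^(2*ν-1) = t^(2*ν) * t⁻¹ := by
      rw [← Real.rpow_neg_one t, ← Real.rpow_add ht0]
      congr 1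
    have hna : ‖besselJ ν t ^ 2 / t‖ = besselJ ν t ^ 2 / t := by
      rw [Real.norm_eq_abs, abs_of_nonneg (div_nonneg (sq_nonneg _) ht0.le)]
    simp only [Pi.div_apply, id_eq]
    rw [hna]
    calc besselJ ν t ^ 2 / t ≤ ((t/2)^ν * B)^2 / t := by
          gcongr
      _ = ((2:ℝ)^(2*ν))⁻¹ * B^2 * t^(2*ν-1) := by
          rw [mul_pow, hrp, hdiv, ht1]
          ring
  · -- the integral
    rw [MeasureTheory.setIntegral_congr_fun measurableSet_Ioo (fun t ht => hpt t ht),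
      ← MeasureTheory.integral_tsum_of_summable_integral_norm hFint hsumnorm]
    refine (tsum_congr hIval).trans ?_
    rw [genHyp]
    simp only [List.map_cons, List.map_nil, List.prod_cons, List.prod_nil]
    rw [← tsum_mul_left]
    apply tsum_congr
    intro n
    have hbS : bS ν n = poch (2*ν+n+1) n / ((n.factorial : ℝ) * Real.Gamma (ν + n + 1)^2) := by
      rw [bS]
      simp only [bc]
      exact key_sum hν n
    have hzd : ((z:ℝ)/2)^(2*ν) = z^(2*ν) * ((2:ℝ)^(2*ν))⁻¹ := by
      rw [Real.div_rpow hz.le (by norm_num), div_eq_mul_inv]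
    have hneg : (-z^2)^n = (-1:ℝ)^n * (z^2)^n := by rw [neg_pow]
    simp only [hK]
    rw [hbS, hzd, hneg]
    linear_combination ((-1:ℝ)^n * z^(2*ν) * ((2:ℝ)^(2*ν))⁻¹ * (z^2)^n) * key_coeff hν n
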